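/- Let G : ℝ≥0 × ℝ≥0 → ℝ≥0 be continuous and suppose x satisfies ∂x/∂t + ∂x/∂s = -x(t,s)·G(t,s) with x(t,0)=1, x ≥ 0, and G(t,s) ≥ 2/l(t) where l(t) := ∫₀^{t-h} x(t,s) ds + w(t) with 0 ≤ w(t) ≤ mh. Then X(t) := ∫₀^{t-h} x(t,s) ds satisfies X'(t) ≤ 1 - 2X(t)/(X(t) + mh) for t ≥ 2h. -/

import Mathlib

open Set

open intervalIntegral MeasureTheory in
/-- Derivative of the moving-endpoint piece. -/
lemma aux_moving (x : ℝ → ℝ → ℝ)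
    (hc : Continuous (fun p : ℝ × ℝ => x p.1 p.2)) (h t : ℝ) :
    HasDerivAt (fun τ => ∫ s in (t - h)..(τ - h), x τ s) (x t (t - h)) t := by
  rw [hasDerivAt_iff_isLittleO, Asymptotics.isLittleO_iff]
  intro ε εpos
  have hca : ContinuousAt (fun p : ℝ × ℝ => x p.1 p.2) (t, t - h) := hc.continuousAt
  rw [Metric.continuousAt_iff] at hca
  obtain ⟨δ, δpos, hδ⟩ := hca ε εpos
  filter_upwards [Metric.ball_mem_nhds t δpos] with τ hτ
  rw [Metric.mem_ball, Real.dist_eq] at hτ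
  have hint : IntervalIntegrable (x τ) volume (t - h) (τ - h) := by
    have : Continuous (x τ) := hc.comp (Continuous.prodMk_right τ)
    exact this.intervalIntegrable _ _
  have hkey : (∫ s in (t - h)..(τ - h), x τ s) - (∫ s in (t - h)..(t - h), x τ s)
      - (τ - t) • x t (t - h)
      = ∫ s in (t - h)..(τ - h), (x τ s - x t (t - h)) := by
    rw [intervalIntegral.integral_same, intervalIntegral.integral_sub hint
      (intervalIntegrable_const), intervalIntegral.integral_const]
    simp only [smul_eq_mul]
    ring
  have hbound : ∀ s ∈ Set.uIoc (t - h) (τ - h), ‖x τ s - x t (t - h)‖ ≤ ε := by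
    intro s hs
    have hs' : |s - (t - h)| ≤ |(τ - h) - (t - h)| := by
      rcases Set.mem_uIoc.mp hs with ⟨h1, h2⟩ | ⟨h1, h2⟩
      · rw [abs_sub_le_iff]
        constructor
        · have := le_abs_self ((τ - h) - (t - h)); linarith
        · have := abs_nonneg ((τ - h) - (t - h)); linarith
      · rw [abs_sub_le_iff]
        constructor
        · have := abs_nonneg ((τ - h) - (t - h)); linarith
        · have h3 := le_abs_self ((t - h) - (τ - h))
          rw [abs_sub_comm] at h3; linarith
    have hdist : dist (τ, s) ((t : ℝ), t - h) < δ := by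
      rw [Prod.dist_eq]
      have h4 : |(τ - h) - (t - h)| = |τ - t| := by ring_nf
      apply max_lt
      · rw [Real.dist_eq]; exact hτ
      · rw [Real.dist_eq]
        calc |s - (t - h)| ≤ |(τ - h) - (t - h)| := hs'
          _ = |τ - t| := h4
          _ < δ := hτ
    have := hδ hdist
    rw [Real.dist_eq] at this
    exact le_of_lt this
  have htri := intervalIntegral.norm_integral_le_of_norm_le_const hbound
  rw [intervalIntegral.integral_same] at hkey ⊢
  have : ‖(∫ s in (t - h)..(τ - h), x τ s) - 0 - (τ - t) • x t (t - h)‖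
      ≤ ε * ‖τ - t‖ := by
    rw [show (∫ s in (t - h)..(τ - h), x τ s) - 0 - (τ - t) • x t (t - h)
        = (∫ s in (t - h)..(τ - h), x τ s) - (0 : ℝ) - (τ - t) • x t (t - h) by ring]
    calc ‖(∫ s in (t - h)..(τ - h), x τ s) - (0:ℝ) - (τ - t) • x t (t - h)‖
        = ‖∫ s in (t - h)..(τ - h), (x τ s - x t (t - h))‖ := by
          rw [← hkey]
      _ ≤ ε * |(τ - h) - (t - h)| := htri
      _ = ε * ‖τ - t‖ := by rw [Real.norm_eq_abs]; ring_nf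
  simpa using this

theorem stmt17 (m : ℕ) (h : ℝ) (hm : 2 ≤ m) (hh : 0 < h)
    (G x : ℝ → ℝ → ℝ) (w l : ℝ → ℝ)
    (hGc : Continuous (fun p : ℝ × ℝ => G p.1 p.2))
    (hG0 : ∀ t s, 0 ≤ G t s)
    (hsmooth : ContDiff ℝ 1 (fun p : ℝ × ℝ => x p.1 p.2))
    (hx0 : ∀ t s, 0 ≤ x t s)
    (hbc : ∀ t, x t 0 = 1)
    (hw : ∀ t, 0 ≤ w t ∧ w t ≤ m * h)
    (hl : ∀ t, l t = (∫ s in (0:ℝ)..(t - h), x t s) + w t)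
    (hGl : ∀ t s, 2 / l t ≤ G t s)
    (hpde : ∀ t s, deriv (fun τ => x τ s) t + deriv (fun σ => x t σ) s
        = -(x t s * G t s)) :
    ∀ t, 2 * h ≤ t →
      deriv (fun τ => ∫ s in (0:ℝ)..(τ - h), x τ s) t ≤
        1 - 2 * (∫ s in (0:ℝ)..(t - h), x t s) /
          ((∫ s in (0:ℝ)..(t - h), x t s) + m * h) := by
  intro t ht
  set f : ℝ × ℝ → ℝ := fun p => x p.1 p.2 with hf
  have hc : Continuous f := hsmooth.continuous
  have contx : ∀ u : ℝ, Continuous (x u) := fun u => hc.comp (Continuous.prodMk_right u)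
  have hf' : Continuous (fderiv ℝ f) := hsmooth.continuous_fderiv one_ne_zero
  set D : ℝ × ℝ → ℝ := fun p => fderiv ℝ f p (1, 0) with hDdef
  set E : ℝ × ℝ → ℝ := fun p => fderiv ℝ f p (0, 1) with hEdef
  have hDc : Continuous D := hf'.clm_apply continuous_const
  have hEc : Continuous E := hf'.clm_apply continuous_const
  have hD : ∀ u s : ℝ, HasDerivAt (fun τ => x τ s) (D (u, s)) u := by
    intro u s
    have hdf : HasFDerivAt f (fderiv ℝ f (u, s)) (u, s) :=
      (hsmooth.differentiable one_ne_zero (u, s)).hasFDerivAt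
    have hline : HasDerivAt (fun τ : ℝ => ((τ, s) : ℝ × ℝ)) ((1 : ℝ), (0 : ℝ)) u :=
      (hasDerivAt_id u).prodMk (hasDerivAt_const u s)
    exact hdf.comp_hasDerivAt u hline
  have hE : ∀ u s : ℝ, HasDerivAt (fun σ => x u σ) (E (u, s)) s := by
    intro u s
    have hdf : HasFDerivAt f (fderiv ℝ f (u, s)) (u, s) :=
      (hsmooth.differentiable one_ne_zero (u, s)).hasFDerivAt
    have hline : HasDerivAt (fun σ : ℝ => ((u, σ) : ℝ × ℝ)) ((0 : ℝ), (1 : ℝ)) s :=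
      (hasDerivAt_const s u).prodMk (hasDerivAt_id s)
    exact hdf.comp_hasDerivAt s hline
  set b : ℝ := t - h with hb
  have hb0 : 0 ≤ b := by simp [hb]; linarith
  -- derivative of the fixed-endpoint parametric integral
  have hDc2 : Continuous fun s => D (t, s) := hDc.comp (Continuous.prodMk_right t)
  obtain ⟨C, hC⟩ := ((isCompact_closedBall t 1).prod isCompact_uIcc).exists_bound_of_continuousOn
    (s := Metric.closedBall t 1 ×ˢ uIcc 0 b) hDc.continuousOn
  have hpar : HasDerivAt (fun u => ∫ s in (0:ℝ)..b, x u s)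
      (∫ s in (0:ℝ)..b, D (t, s)) t := by
    have := intervalIntegral.hasDerivAt_integral_of_dominated_loc_of_deriv_le
      (F := fun u s => x u s) (F' := fun u s => D (u, s)) (x₀ := t)
      (a := 0) (b := b) (bound := fun _ => C) (μ := MeasureTheory.volume)
      (s := Metric.ball t 1) (Metric.ball_mem_nhds t one_pos)
      (Filter.Eventually.of_forall fun u => ((contx u).aestronglyMeasurable).restrict)
      ((contx t).intervalIntegrable _ _)
      ((hDc2.aestronglyMeasurable).restrict)
      (Filter.Eventually.of_forall fun s hs u hu => by
        exact hC (u, s) ⟨Metric.ball_subset_closedBall hu, Set.uIoc_subset_uIcc hs⟩)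
      (intervalIntegrable_const)
      (Filter.Eventually.of_forall fun s _ u _ => hD u s)
    exact this.2
  -- derivative of the moving-endpoint piece
  have hmov : HasDerivAt (fun τ => ∫ s in b..(τ - h), x τ s) (x t b) t := by
    simpa [hb] using aux_moving x hc h t
  -- decompose
  have hsplit : (fun τ => ∫ s in (0:ℝ)..(τ - h), x τ s)
      = fun τ => (∫ s in (0:ℝ)..b, x τ s) + ∫ s in b..(τ - h), x τ s := by
    funext τ
    rw [intervalIntegral.integral_add_adjacent_intervals
      ((contx τ).intervalIntegrable _ _) ((contx τ).intervalIntegrable _ _)]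
  have hder : HasDerivAt (fun τ => ∫ s in (0:ℝ)..(τ - h), x τ s)
      ((∫ s in (0:ℝ)..b, D (t, s)) + x t b) t := by
    rw [hsplit]; exact hpar.add hmov
  rw [hder.deriv]
  -- compute the integral of D via the PDE
  have hDeq : ∀ s : ℝ, D (t, s) = -(x t s * G t s) - E (t, s) := by
    intro s
    have h1 := hpde t s
    rw [(hD t s).deriv, (hE t s).deriv] at h1
    linarith
  have hintxG : IntervalIntegrable (fun s => x t s * G t s) MeasureTheory.volume 0 b :=
    ((contx t).mul (hGc.comp (Continuous.prodMk_right t))).intervalIntegrable _ _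
  have hintE : IntervalIntegrable (fun s => E (t, s)) MeasureTheory.volume 0 b :=
    (hEc.comp (Continuous.prodMk_right t)).intervalIntegrable _ _
  have hEint : (∫ s in (0:ℝ)..b, E (t, s)) = x t b - x t 0 :=
    intervalIntegral.integral_eq_sub_of_hasDerivAt (fun s _ => hE t s) hintE
  have hIeq : (∫ s in (0:ℝ)..b, D (t, s))
      = -(∫ s in (0:ℝ)..b, x t s * G t s) - (x t b - 1) := by
    have h2 : (fun s => D (t, s)) = fun s => -(x t s * G t s + E (t, s)) := by
      funext s; rw [hDeq s]; ring
    rw [h2, intervalIntegral.integral_neg, intervalIntegral.integral_add hintxG hintE,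
      hEint, hbc t]
    ring
  rw [hIeq]
  -- final inequality
  set X : ℝ := ∫ s in (0:ℝ)..b, x t s with hX
  have hX0 : 0 ≤ X := intervalIntegral.integral_nonneg hb0 (fun s _ => hx0 t s)
  have hmh : 0 < (m : ℝ) * h := by
    have : (2 : ℝ) ≤ m := by exact_mod_cast hm
    nlinarith
  have hmono : 2 / l t * X ≤ ∫ s in (0:ℝ)..b, x t s * G t s := by
    rw [← intervalIntegral.integral_const_mul]
    apply intervalIntegral.integral_mono_on hb0
      ((continuous_const.mul (contx t)).intervalIntegrable _ _) hintxG
    intro s _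
    calc 2 / l t * x t s = x t s * (2 / l t) := by ring
      _ ≤ x t s * G t s := mul_le_mul_of_nonneg_left (hGl t s) (hx0 t s)
  have hfin : 2 * X / (X + m * h) ≤ 2 / l t * X := by
    rcases eq_or_lt_of_le hX0 with hX0' | hX0'
    · rw [← hX0']; simp
    · have hl1 : 0 < l t := by rw [hl t]; have := (hw t).1; simp only [← hb, ← hX]; linarith
      have hl2 : l t ≤ X + m * h := by
        rw [hl t]; have := (hw t).2; simp only [← hb, ← hX]; linarith
      have h2 : 2 / (X + (m : ℝ) * h) ≤ 2 / l t := by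
        apply div_le_div_of_nonneg_left (by norm_num) hl1 hl2
      calc 2 * X / (X + (m : ℝ) * h) = 2 / (X + (m : ℝ) * h) * X := by ring
        _ ≤ 2 / l t * X := mul_le_mul_of_nonneg_right h2 hX0
  have : 2 * X / (X + (m : ℝ) * h) ≤ ∫ s in (0:ℝ)..b, x t s * G t s :=
    le_trans hfin hmono
  linarith
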